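/- The 2×2 matrix witnesses: γ₂(T₂) = 2/√3, where T₂ = [[1,0],[1,1]]; equivalently the γ₂ norm of the 3×2 incidence matrix A = [[1,1],[1,0],[0,1]] equals 2/√3. -/

import Mathlib

open Matrix Real

/-- `‖B‖_{2→∞}`: the largest Euclidean norm of a row of `B`. -/
noncomputable def rowNorm {m n : Type*} [Fintype m] [Fintype n] (B : Matrix m n ℝ) : ℝ :=
  ⨆ i, Real.sqrt (∑ j, B i j ^ 2)

/-- `‖C‖_{1→2}`: the largest Euclidean norm of a column of `C`. -/
noncomputable def colNorm {m n : Type*} [Fintype m] [Fintype n] (C : Matrix m n ℝ) : ℝ :=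
  ⨆ j, Real.sqrt (∑ i, C i j ^ 2)

/-- The `γ₂` factorization norm of a real matrix. -/
noncomputable def gamma2 {m n : Type*} [Fintype m] [Fintype n] (A : Matrix m n ℝ) : ℝ :=
  sInf {t | ∃ (k : ℕ) (B : Matrix m (Fin k) ℝ) (C : Matrix (Fin k) n ℝ),
    A = B * C ∧ t = rowNorm B * colNorm C}

lemma key_sos (u1 u2 v1 v2 t s : ℝ) (hs : s^2 = 3) :
    2*s*t*(2*u1*v1 - u1*v2 + 2*u2*v1 + 2*u2*v2) ≤ 3*t^2*u1^2 + 6*t^2*u2^2 + 6*v1^2 + 3*v2^2 := by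
  nlinarith [sq_nonneg (s*v1 - t*(u1+u2)), sq_nonneg (s*v2 + t*(u1 - 2*u2)), hs]

lemma lb_aux {m : Type*} [Fintype m] {k : ℕ} (B : Matrix m (Fin k) ℝ) (C : Matrix (Fin k) (Fin 2) ℝ)
    (i₀ i₁ : m)
    (e00 : ∑ l, B i₀ l * C l 0 = 1) (e01 : ∑ l, B i₀ l * C l 1 = 0)
    (e10 : ∑ l, B i₁ l * C l 0 = 1) (e11 : ∑ l, B i₁ l * C l 1 = 1) :
    2 / Real.sqrt 3 ≤ rowNorm B * colNorm C := by
  set s : ℝ := Real.sqrt 3 with hsdef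
  have hs : s ^ 2 = 3 := Real.sq_sqrt (by norm_num)
  have hs0 : 0 < s := Real.sqrt_pos.2 (by norm_num)
  set r : ℝ := rowNorm B with hrdef
  set c : ℝ := colNorm C with hcdef
  -- row bounds
  have hrow : ∀ i : m, Real.sqrt (∑ j, B i j ^ 2) ≤ r :=
    fun i => le_ciSup (f := fun i => Real.sqrt (∑ j, B i j ^ 2)) (Finite.bddAbove_range _) i
  have hcol : ∀ j : Fin 2, Real.sqrt (∑ l, C l j ^ 2) ≤ c :=
    fun j => le_ciSup (f := fun j => Real.sqrt (∑ l, C l j ^ 2)) (Finite.bddAbove_range _) j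
  have hr0 : 0 ≤ r := le_trans (Real.sqrt_nonneg _) (hrow i₀)
  have hc0 : 0 ≤ c := le_trans (Real.sqrt_nonneg _) (hcol 0)
  have hsumnn : ∀ i : m, (0:ℝ) ≤ ∑ j, B i j ^ 2 :=
    fun i => Finset.sum_nonneg fun _ _ => sq_nonneg _
  have hsumnn' : ∀ j : Fin 2, (0:ℝ) ≤ ∑ l, C l j ^ 2 :=
    fun j => Finset.sum_nonneg fun _ _ => sq_nonneg _
  have hSb : ∀ i : m, ∑ j, B i j ^ 2 ≤ r ^ 2 := by
    intro i
    calc ∑ j, B i j ^ 2 = (Real.sqrt (∑ j, B i j ^ 2)) ^ 2 := (Real.sq_sqrt (hsumnn i)).symm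
    _ ≤ r ^ 2 := pow_le_pow_left₀ (Real.sqrt_nonneg _) (hrow i) 2
  have hSc : ∀ j : Fin 2, ∑ l, C l j ^ 2 ≤ c ^ 2 := by
    intro j
    calc ∑ l, C l j ^ 2 = (Real.sqrt (∑ l, C l j ^ 2)) ^ 2 := (Real.sq_sqrt (hsumnn' j)).symm
    _ ≤ c ^ 2 := pow_le_pow_left₀ (Real.sqrt_nonneg _) (hcol j) 2
  -- positivity of r and c
  have hrpos : 0 < r := by
    rcases hr0.lt_or_eq with h | h
    · exact h
    · exfalso
      have h1 : Real.sqrt (∑ j, B i₀ j ^ 2) = 0 :=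
        le_antisymm (h ▸ hrow i₀) (Real.sqrt_nonneg _)
      have h2 : ∑ j, B i₀ j ^ 2 = 0 := (Real.sqrt_eq_zero (hsumnn i₀)).mp h1
      have h3 := (Finset.sum_eq_zero_iff_of_nonneg (fun i _ => sq_nonneg (B i₀ i))).mp h2
      have : (1:ℝ) = 0 := by
        rw [← e00]
        apply Finset.sum_eq_zero
        intro l _
        have := pow_eq_zero_iff (n := 2) (by norm_num) |>.mp (h3 l (Finset.mem_univ l))
        rw [this, zero_mul]
      norm_num at this
  have hcpos : 0 < c := by
    rcases hc0.lt_or_eq with h | h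
    · exact h
    · exfalso
      have h1 : Real.sqrt (∑ l, C l 0 ^ 2) = 0 :=
        le_antisymm (h ▸ hcol 0) (Real.sqrt_nonneg _)
      have h2 : ∑ l, C l 0 ^ 2 = 0 := (Real.sqrt_eq_zero (hsumnn' 0)).mp h1
      have h3 := (Finset.sum_eq_zero_iff_of_nonneg (fun l _ => sq_nonneg (C l 0))).mp h2
      have : (1:ℝ) = 0 := by
        rw [← e00]
        apply Finset.sum_eq_zero
        intro l _
        have := pow_eq_zero_iff (n := 2) (by norm_num) |>.mp (h3 l (Finset.mem_univ l))
        rw [this, mul_zero]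
      norm_num at this
  -- summed inequality for all t
  have hq : ∀ t : ℝ, 12 * s * t ≤ 9 * t ^ 2 * r ^ 2 + 9 * c ^ 2 := by
    intro t
    have H := Finset.sum_le_sum (s := Finset.univ) (f := fun l : Fin k =>
        (4*s*t)*(B i₀ l * C l 0) + (-(2*s*t))*(B i₀ l * C l 1)
          + (4*s*t)*(B i₁ l * C l 0) + (4*s*t)*(B i₁ l * C l 1))
      (g := fun l : Fin k =>
        3*t^2*(B i₀ l)^2 + 6*t^2*(B i₁ l)^2 + 6*(C l 0)^2 + 3*(C l 1)^2)
      (fun l _ => by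
        calc 4*s*t*(B i₀ l * C l 0) + (-(2*s*t))*(B i₀ l * C l 1)
              + (4*s*t)*(B i₁ l * C l 0) + (4*s*t)*(B i₁ l * C l 1)
            = 2*s*t*(2*(B i₀ l)*(C l 0) - (B i₀ l)*(C l 1)
                + 2*(B i₁ l)*(C l 0) + 2*(B i₁ l)*(C l 1)) := by ring
          _ ≤ _ := key_sos (B i₀ l) (B i₁ l) (C l 0) (C l 1) t s hs)
    rw [Finset.sum_add_distrib, Finset.sum_add_distrib, Finset.sum_add_distrib,
        ← Finset.mul_sum, ← Finset.mul_sum, ← Finset.mul_sum, ← Finset.mul_sum,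
        e00, e01, e10, e11] at H
    rw [Finset.sum_add_distrib, Finset.sum_add_distrib, Finset.sum_add_distrib,
        ← Finset.mul_sum, ← Finset.mul_sum, ← Finset.mul_sum, ← Finset.mul_sum] at H
    have b0 := hSb i₀; have b1 := hSb i₁; have c0 := hSc 0; have c1 := hSc 1
    nlinarith [mul_le_mul_of_nonneg_left b0 (by positivity : (0:ℝ) ≤ 3*t^2),
      mul_le_mul_of_nonneg_left b1 (by positivity : (0:ℝ) ≤ 6*t^2)]
  -- instantiate t = c / r
  have h2 := hq (c / r)
  have hrne : r ≠ 0 := ne_of_gt hrpos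
  have h2' : 12 * s * c * r ≤ 18 * (c * r) ^ 2 := by
    have e1 : (c / r) ^ 2 * r ^ 2 = c ^ 2 := by field_simp
    have e2 : 12 * s * (c / r) * r = 12 * s * c := by field_simp
    have := mul_le_mul_of_nonneg_right h2 hr0
    nlinarith [this, e1, e2, sq_nonneg r, sq_nonneg c]
  have hx : 0 < c * r := mul_pos hcpos hrpos
  have hA : 12 * s ≤ 18 * (c * r) := by nlinarith [h2', hx]
  have hB : 12 * s * s ≤ 18 * (c * r) * s := mul_le_mul_of_nonneg_right hA hs0.le
  rw [div_le_iff₀ hs0]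
  nlinarith [hB, hs]

noncomputable def C₂ : Matrix (Fin 2) (Fin 2) ℝ := !![2/Real.sqrt 3, 1/Real.sqrt 3; 0, 1]
noncomputable def B₂ : Matrix (Fin 2) (Fin 2) ℝ := !![Real.sqrt 3/2, -(1:ℝ)/2; Real.sqrt 3/2, 1/2]
noncomputable def B₃ : Matrix (Fin 3) (Fin 2) ℝ :=
  !![Real.sqrt 3/2, 1/2; Real.sqrt 3/2, -(1:ℝ)/2; 0, 1]

lemma s3 : Real.sqrt 3 * Real.sqrt 3 = 3 := Real.mul_self_sqrt (by norm_num)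
lemma s3ne : Real.sqrt 3 ≠ 0 := ne_of_gt (Real.sqrt_pos.2 (by norm_num))
lemma sq34 : (Real.sqrt 3 / 2) ^ 2 = 3 / 4 := by
  rw [div_pow, Real.sq_sqrt] <;> norm_num
lemma h43 : Real.sqrt (4/3) = 2 / Real.sqrt 3 := by
  rw [show (4:ℝ)/3 = (2/Real.sqrt 3)^2 by rw [div_pow, Real.sq_sqrt] <;> norm_num,
    Real.sqrt_sq (by positivity)]

lemma prodT2 : Matrix.of !![(1 : ℝ), 0; 1, 1] = B₂ * C₂ := by
  ext i j
  change !![(1 : ℝ), 0; 1, 1] i j = _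
  fin_cases i <;> fin_cases j <;>
    simp [B₂, C₂, Matrix.mul_apply, Fin.sum_univ_two] <;>
    field_simp <;> nlinarith [s3]

lemma prodA3 : Matrix.of !![(1 : ℝ), 1; 1, 0; 0, 1] = B₃ * C₂ := by
  ext i j
  change !![(1 : ℝ), 1; 1, 0; 0, 1] i j = _
  fin_cases i <;> fin_cases j <;>
    simp [B₃, C₂, Matrix.mul_apply, Fin.sum_univ_two] <;>
    field_simp <;> nlinarith [s3]

lemma rowB2 : rowNorm B₂ = 1 := by
  have h : ∀ i, Real.sqrt (∑ j, B₂ i j ^ 2) = 1 := by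
    intro i
    fin_cases i <;> simp [B₂, Fin.sum_univ_two] <;> nlinarith [sq34]
  rw [rowNorm, iSup_congr h, ciSup_const]

lemma rowB3 : rowNorm B₃ = 1 := by
  have h : ∀ i, Real.sqrt (∑ j, B₃ i j ^ 2) = 1 := by
    intro i
    fin_cases i <;> simp [B₃, Fin.sum_univ_two] <;> nlinarith [sq34]
  rw [rowNorm, iSup_congr h, ciSup_const]

lemma colC2 : colNorm C₂ = 2 / Real.sqrt 3 := by
  have h : ∀ j, Real.sqrt (∑ i, C₂ i j ^ 2) = 2 / Real.sqrt 3 := by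
    intro j
    fin_cases j
    · simp [C₂, Fin.sum_univ_two]
      exact Real.sqrt_sq (by positivity)
    · simp [C₂, Fin.sum_univ_two]
      rw [show (3:ℝ)⁻¹ + 1 = 4/3 by norm_num, h43]
  rw [colNorm, iSup_congr h, ciSup_const]

/-- `γ₂(T₂) = 2/√3`, where `T₂ = [[1,0],[1,1]]`, and likewise the
γ₂ norm of the 3×2 incidence matrix `[[1,1],[1,0],[0,1]]` equals `2/√3`. -/
theorem gamma2_T2 :
    gamma2 (Matrix.of !![(1 : ℝ), 0; 1, 1]) = 2 / Real.sqrt 3 ∧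
    gamma2 (Matrix.of !![(1 : ℝ), 1; 1, 0; 0, 1]) = 2 / Real.sqrt 3 := by
  have lb1 : ∀ t ∈ {t | ∃ (k : ℕ) (B : Matrix (Fin 2) (Fin k) ℝ) (C : Matrix (Fin k) (Fin 2) ℝ),
      Matrix.of !![(1 : ℝ), 0; 1, 1] = B * C ∧ t = rowNorm B * colNorm C},
      2 / Real.sqrt 3 ≤ t := by
    rintro t ⟨k, B, C, hBC, rfl⟩
    have h : ∀ i j, Matrix.of !![(1 : ℝ), 0; 1, 1] i j = ∑ l, B i l * C l j := by
      intro i j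
      rw [hBC, Matrix.mul_apply]
    exact lb_aux B C 0 1 ((h 0 0).symm.trans rfl) ((h 0 1).symm.trans rfl)
      ((h 1 0).symm.trans rfl) ((h 1 1).symm.trans rfl)
  have lb2 : ∀ t ∈ {t | ∃ (k : ℕ) (B : Matrix (Fin 3) (Fin k) ℝ) (C : Matrix (Fin k) (Fin 2) ℝ),
      Matrix.of !![(1 : ℝ), 1; 1, 0; 0, 1] = B * C ∧ t = rowNorm B * colNorm C},
      2 / Real.sqrt 3 ≤ t := by
    rintro t ⟨k, B, C, hBC, rfl⟩
    have h : ∀ i j, Matrix.of !![(1 : ℝ), 1; 1, 0; 0, 1] i j = ∑ l, B i l * C l j := by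
      intro i j
      rw [hBC, Matrix.mul_apply]
    exact lb_aux B C 1 0 ((h 1 0).symm.trans rfl) ((h 1 1).symm.trans rfl)
      ((h 0 0).symm.trans rfl) ((h 0 1).symm.trans rfl)
  have mem1 : (2 / Real.sqrt 3) ∈ {t | ∃ (k : ℕ) (B : Matrix (Fin 2) (Fin k) ℝ)
      (C : Matrix (Fin k) (Fin 2) ℝ),
      Matrix.of !![(1 : ℝ), 0; 1, 1] = B * C ∧ t = rowNorm B * colNorm C} :=
    ⟨2, B₂, C₂, prodT2, by rw [rowB2, colC2, one_mul]⟩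
  have mem2 : (2 / Real.sqrt 3) ∈ {t | ∃ (k : ℕ) (B : Matrix (Fin 3) (Fin k) ℝ)
      (C : Matrix (Fin k) (Fin 2) ℝ),
      Matrix.of !![(1 : ℝ), 1; 1, 0; 0, 1] = B * C ∧ t = rowNorm B * colNorm C} :=
    ⟨2, B₃, C₂, prodA3, by rw [rowB3, colC2, one_mul]⟩
  constructor
  · exact le_antisymm (csInf_le ⟨2 / Real.sqrt 3, lb1⟩ mem1) (le_csInf ⟨_, mem1⟩ lb1)
  · exact le_antisymm (csInf_le ⟨2 / Real.sqrt 3, lb2⟩ mem2) (le_csInf ⟨_, mem2⟩ lb2)
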